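/- Let G be a classical Gauss diagram with n ≥ 2 arrows (a circle with n disjoint signed arrows, dividing the circle into 2n edges). Let M : ℝ^{2n} → ℝ^{n+1} be the linear map whose rows are the edge-incidence vectors of the n distinguished loops together with the full circle. Then M has rank n+1, i.e. dim(ker M) = n - 1. -/

import Mathlib

/-- A Gauss diagram with `n` arrows: the `2n` arrow endpoints are the points of the cyclic group
`ZMod (2*n)` (listed in the cyclic order of the oriented circle), and arrow `a` points from its
underpass point `tail a` to its overpass point `head a`.  The edge `e` of the diagram is the arc
of the circle from the point `e` to the point `e + 1`. -/
structure GaussDiagram (n : ℕ) where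
  head : Fin n → ZMod (2 * n)
  tail : Fin n → ZMod (2 * n)
  inj : Function.Injective (Sum.elim head tail)

namespace GaussDiagram

variable {n : ℕ}

/-- The edge-characteristic vector of the distinguished loop of arrow `a`: it traverses the
edges from `head a` to `tail a` along the orientation of the circle (and returns along the
arrow). -/
def arcChain (G : GaussDiagram n) (a : Fin n) : ZMod (2 * n) → ℤ :=
  fun e => if (e - G.head a).val < (G.tail a - G.head a).val then 1 else 0

/-- The `(n+1) × 2n` matrix whose rows are the edge-characteristic vectors of the `n`
distinguished loops together with the full circle (the all-ones row, indexed by `none`). -/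
def loopMatrix (G : GaussDiagram n) : Matrix (Option (Fin n)) (ZMod (2 * n)) ℤ :=
  fun r e => r.elim 1 fun a => G.arcChain a e

/-- The elementary refinement move of type II+ at arrow `a`: add `+1` on the edge directly
following each endpoint of `a` and `-1` on the edge directly preceding it (with multiplicity). -/
def moveVec (G : GaussDiagram n) (a : Fin n) : ZMod (2 * n) → ℤ :=
  fun e => (if e = G.head a then 1 else 0) + (if e = G.tail a then 1 else 0)
    - (if e = G.head a - 1 then 1 else 0) - (if e = G.tail a - 1 then 1 else 0)

/-- The edge `e` (from point `e` to point `e+1`) is adjacent to the arrow `a` if one of its two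
boundary points is an endpoint of `a`. -/
def adjacent (G : GaussDiagram n) (e : ZMod (2 * n)) (a : Fin n) : Prop :=
  e = G.head a ∨ e + 1 = G.head a ∨ e = G.tail a ∨ e + 1 = G.tail a

end GaussDiagram

/-- A move of a loop in a Gauss diagram: either follow the next edge of the circle in the
direction of its orientation (`circ`), or jump along an arrow, in either direction. -/
inductive Move (n : ℕ) where
  | circ : Move n
  | jumpHT : Fin n → Move n
  | jumpTH : Fin n → Move n

/-- Whether a move is a jump along an arrow. -/
def Move.isJump {n : ℕ} : Move n → Prop
  | .circ => False
  | _ => True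

namespace GaussDiagram

/-- The point reached by performing one move starting at the point `p`. -/
def target (G : GaussDiagram n) (p : ZMod (2 * n)) : Move n → ZMod (2 * n)
  | .circ => p + 1
  | .jumpHT a => G.tail a
  | .jumpTH a => G.head a

/-- Validity of a sequence of moves starting at `p`: a jump along an arrow may only be performed
from an endpoint of that arrow. -/
def validFrom (G : GaussDiagram n) : ZMod (2 * n) → List (Move n) → Prop
  | _, [] => True
  | p, mv :: r =>
      (match mv with
        | .circ => True
        | .jumpHT a => p = G.head a
        | .jumpTH a => p = G.tail a) ∧ validFrom G (G.target p mv) r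

/-- The point reached after performing a sequence of moves from `p`. -/
def run (G : GaussDiagram n) : ZMod (2 * n) → List (Move n) → ZMod (2 * n)
  | p, [] => p
  | p, mv :: r => run G (G.target p mv) r

/-- A loop in the Gauss diagram which respects the orientation of the circle: a closed valid
sequence of moves (circle arcs are always traversed in the orientation direction, arrows may be
traversed both ways). -/
structure Loop (G : GaussDiagram n) where
  start : ZMod (2 * n)
  moves : List (Move n)
  valid : G.validFrom start moves
  closed : G.run start moves = start

/-- A loop is *reduced* (nontrivial) if it is nonempty and never backtracks: no two cyclically
consecutive moves are jumps (two consecutive jumps necessarily cancel along the same arrow). -/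
def Loop.Reduced {G : GaussDiagram n} (L : Loop G) : Prop :=
  L.moves ≠ [] ∧
  L.moves.Chain' (fun m₁ m₂ => ¬(m₁.isJump ∧ m₂.isJump)) ∧
  ∀ m₁ ∈ L.moves.getLast?, ∀ m₂ ∈ L.moves.head?, ¬(m₁.isJump ∧ m₂.isJump)

/-- Whether a sequence of moves from `p` meets a marking of the marking function `m` (which
records the number of (positive) markings on each edge). -/
def meetsFrom (G : GaussDiagram n) (m : ZMod (2 * n) → ℕ) :
    ZMod (2 * n) → List (Move n) → Prop
  | _, [] => False
  | p, .circ :: r => 0 < m p ∨ meetsFrom G m (p + 1) r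
  | _, .jumpHT a :: r => meetsFrom G m (G.tail a) r
  | _, .jumpTH a :: r => meetsFrom G m (G.head a) r

/-- A loop meets a marking if one of the circle arcs it traverses carries a marking. -/
def Loop.Meets {G : GaussDiagram n} (m : ZMod (2 * n) → ℕ) (L : Loop G) : Prop :=
  G.meetsFrom m L.start L.moves

/-- In the diagram obtained by deleting the arrows of `R`, the point `p` is directly preceded by
a marking: going backwards along the circle from `p` one finds a marking before meeting any
endpoint of a non-deleted arrow. -/
def precededBy (G : GaussDiagram n) (m : ZMod (2 * n) → ℕ) (R : Set (Fin n))
    (p : ZMod (2 * n)) : Prop :=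
  ∃ j : ℕ, 0 < m (p - 1 - (j : ZMod (2 * n))) ∧
    ∀ i < j, ∃ a ∈ R, G.head a = p - 1 - (i : ZMod (2 * n)) ∨
      G.tail a = p - 1 - (i : ZMod (2 * n))

/-- The set of arrows removed after `k` rounds of deleting the arrows of level `1` (those whose
two endpoints are both directly preceded by a marking in the current diagram). -/
def removedAt (G : GaussDiagram n) (m : ZMod (2 * n) → ℕ) : ℕ → Set (Fin n)
  | 0 => ∅
  | k + 1 => removedAt G m k ∪
      {a | G.precededBy m (removedAt G m k) (G.head a) ∧
           G.precededBy m (removedAt G m k) (G.tail a)}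

/-- An arrow has a well-defined level if it is eventually deleted in the level process. -/
def HasLevel (G : GaussDiagram n) (m : ZMod (2 * n) → ℕ) (a : Fin n) : Prop :=
  ∃ k, a ∈ G.removedAt m k

/-- The number of times a sequence of moves from `p` traverses each edge of the circle. -/
def edgeCount (G : GaussDiagram n) : ZMod (2 * n) → List (Move n) → ZMod (2 * n) → ℤ
  | _, [] => 0
  | p, .circ :: r => fun e => (if e = p then 1 else 0) + edgeCount G (p + 1) r e
  | _, .jumpHT a :: r => edgeCount G (G.tail a) r
  | _, .jumpTH a :: r => edgeCount G (G.head a) r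

/-- The net number of traversals of each arrow, counted positively in the tail-to-head
direction (the direction used by the distinguished loops). -/
def netJump {n : ℕ} : List (Move n) → Fin n → ℤ
  | [] => 0
  | .circ :: r => netJump r
  | .jumpHT a :: r => fun b => netJump r b - (if b = a then 1 else 0)
  | .jumpTH a :: r => fun b => (if b = a then 1 else 0) + netJump r b

/-- `y` is a refinement of the decorated Gauss diagram with arrow valuations `dA` and circle
valuation `d`: the sum of the markings along each distinguished loop is the corresponding
valuation, and the total sum is the valuation of the circle. -/
def IsRefinement [NeZero (2 * n)] (G : GaussDiagram n) (dA : Fin n → ℤ) (d : ℤ)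
    (y : ZMod (2 * n) → ℤ) : Prop :=
  (∀ a, ∑ e, G.arcChain a e * y e = dA a) ∧ ∑ e, y e = d

/-- The homology class in `H₁(ℝ × S¹) = ℤ` of a loop of the decorated Gauss diagram with arrow
valuations `dA` and circle valuation `d`, computed by expressing the cycle of the loop in the
basis formed by the distinguished loops and the circle. -/
def loopClass [NeZero (2 * n)] (G : GaussDiagram n) (dA : Fin n → ℤ) (d : ℤ)
    (L : Loop G) : ℤ :=
  ∑ a, netJump L.moves a * dA a +
    (G.edgeCount L.start L.moves 0 - ∑ a, netJump L.moves a * G.arcChain a 0) * d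

end GaussDiagram

namespace GaussDiagram

lemma head_ne_tail {n : ℕ} (G : GaussDiagram n) (a b : Fin n) : G.head a ≠ G.tail b := fun h => by
  have := G.inj (a₁ := Sum.inl a) (a₂ := Sum.inr b) h
  simp at this

lemma head_inj {n : ℕ} (G : GaussDiagram n) : Function.Injective G.head := fun a b h => by
  have := G.inj (a₁ := Sum.inl a) (a₂ := Sum.inl b) h
  simpa using this

lemma jump {n : ℕ} (G : GaussDiagram n) [NeZero (2*n)] (hn : 2 ≤ n) (a : Fin n) (e : ZMod (2*n)) :
    G.arcChain a e - G.arcChain a (e - 1) =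
      (if e = G.head a then 1 else 0) - (if e = G.tail a then 1 else 0) := by
  have h2n : 4 ≤ 2 * n := by omega
  have hd0 : G.tail a - G.head a ≠ 0 := sub_ne_zero.mpr (Ne.symm (G.head_ne_tail a a))
  have hdval : 0 < (G.tail a - G.head a).val :=
    Nat.pos_of_ne_zero fun hp => hd0 ((ZMod.val_eq_zero _).mp hp)
  have hdlt : (G.tail a - G.head a).val < 2 * n := ZMod.val_lt _
  rcases eq_or_ne e (G.head a) with rfl | heh
  · have h1 : ((1 : ZMod (2*n))).val = 1 := by
      rw [ZMod.val_one_eq_one_mod]; exact Nat.mod_eq_of_lt (by omega)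
    haveI : NeZero (1 : ZMod (2*n)) := ⟨fun hc => by
      have := congrArg ZMod.val hc; simp [h1] at this⟩
    have hneg : ((-1 : ZMod (2*n))).val = 2*n - 1 := by
      rw [ZMod.val_neg_of_ne_zero, h1]
    have e1 : G.arcChain a (G.head a) = 1 := by
      unfold arcChain; rw [sub_self, ZMod.val_zero, if_pos hdval]
    have e2 : G.arcChain a (G.head a - 1) = 0 := by
      unfold arcChain
      rw [show G.head a - 1 - G.head a = -1 by ring, hneg, if_neg (by omega)]
    rw [e1, e2, if_pos rfl, if_neg (G.head_ne_tail a a)]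
  · have hx0 : e - G.head a ≠ 0 := sub_ne_zero.mpr heh
    have hxpos : 0 < (e - G.head a).val :=
      Nat.pos_of_ne_zero fun hp => hx0 ((ZMod.val_eq_zero _).mp hp)
    obtain ⟨k, hk⟩ : ∃ k, (e - G.head a).val = k + 1 := ⟨(e - G.head a).val - 1, by omega⟩
    have hklt : k < 2 * n := by have := ZMod.val_lt (e - G.head a); omega
    have hprev : (e - 1 - G.head a) = ((k : ℕ) : ZMod (2*n)) := by
      have hxk : e - G.head a = ((k : ℕ) : ZMod (2*n)) + 1 := by
        have h5 : e - G.head a = (((e - G.head a).val : ℕ) : ZMod (2*n)) :=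
          (ZMod.natCast_zmod_val _).symm
        rw [h5, hk]; push_cast; ring
      have : e - 1 - G.head a = (e - G.head a) - 1 := by ring
      rw [this, hxk]; ring
    have hprevval : (e - 1 - G.head a).val = k := by rw [hprev, ZMod.val_cast_of_lt hklt]
    have het : e = G.tail a ↔ k + 1 = (G.tail a - G.head a).val := by
      constructor
      · rintro rfl; omega
      · intro hkd
        have h6 : (e - G.head a).val = (G.tail a - G.head a).val := by omega
        have h7 := ZMod.val_injective _ h6
        have h8 : e - G.head a + G.head a = G.tail a - G.head a + G.head a := by rw [h7]
        simpa using h8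
    have e3 : G.arcChain a e = if k + 1 < (G.tail a - G.head a).val then 1 else 0 := by
      unfold arcChain; rw [hk]
    have e4 : G.arcChain a (e - 1) =
        if k < (G.tail a - G.head a).val then 1 else 0 := by
      unfold arcChain; rw [hprevval]
    have e5 : (if e = G.tail a then (1:ℤ) else 0) =
        if k + 1 = (G.tail a - G.head a).val then 1 else 0 := if_congr het rfl rfl
    rw [e3, e4, e5, if_neg heh]
    split_ifs <;> omega

lemma jumpR {n : ℕ} (G : GaussDiagram n) [NeZero (2*n)] (hn : 2 ≤ n) (a : Fin n) (e : ZMod (2*n)) :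
    ((G.arcChain a e : ℤ) : ℝ) - ((G.arcChain a (e - 1) : ℤ) : ℝ) =
      (if e = G.head a then 1 else 0) - (if e = G.tail a then 1 else 0) := by
  have h := G.jump hn a e
  have := congrArg (fun z : ℤ => (z : ℝ)) h
  push_cast [apply_ite (fun z : ℤ => (z : ℝ))] at this
  simpa using this

end GaussDiagram

/-- For a Gauss diagram with `n ≥ 2` arrows, the `(n+1) × 2n` real matrix whose rows are the
edge-incidence vectors of the `n` distinguished loops together with the full circle has rank
`n + 1`; equivalently `dim ker M = n - 1`. -/
theorem stmt6 (n : ℕ) [NeZero (2 * n)] (hn : 2 ≤ n) (G : GaussDiagram n) :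
    (G.loopMatrix.map ((↑) : ℤ → ℝ)).rank = n + 1 := by
  have hli : LinearIndependent ℝ (G.loopMatrix.map ((↑) : ℤ → ℝ)).row := by
    rw [Fintype.linearIndependent_iff]
    intro g hsum
    have hpt : ∀ e : ZMod (2*n),
        g none + ∑ a, g (some a) * ((G.arcChain a e : ℤ) : ℝ) = 0 := by
      intro e
      have := congrFun hsum e
      simpa [Fintype.sum_option, GaussDiagram.loopMatrix, Matrix.map_apply, Matrix.row] using this
    have hb : ∀ b, g (some b) = 0 := by
      intro b
      have h1 := hpt (G.head b)
      have h2 := hpt (G.head b - 1)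
      have h3 : ∑ a, g (some a) * (((G.arcChain a (G.head b) : ℤ) : ℝ)
          - ((G.arcChain a (G.head b - 1) : ℤ) : ℝ)) = 0 := by
        simp only [mul_sub, Finset.sum_sub_distrib]
        linarith
      have h4 : ∀ a, (((G.arcChain a (G.head b) : ℤ) : ℝ)
          - ((G.arcChain a (G.head b - 1) : ℤ) : ℝ)) = if a = b then 1 else 0 := by
        intro a
        rw [G.jumpR hn a (G.head b), if_neg (G.head_ne_tail b a)]
        by_cases hab : a = b
        · subst hab; simp
        · rw [if_neg (fun hc => hab (G.head_inj hc.symm)), if_neg hab]; ring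
      rw [Finset.sum_congr rfl (fun a _ => by rw [h4 a])] at h3
      simpa using h3
    intro i
    cases i with
    | some b => exact hb b
    | none =>
      have := hpt 0
      simp only [hb, zero_mul, Finset.sum_const_zero, add_zero] at this
      exact this
  rw [hli.rank_matrix]
  simp
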